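/- Let M₁, M₂ be ITL^e models and Z_n ⊆ ⋯ ⊆ Z_0 ⊆ W₁ × W₂ a bounded ◯-bisimulation. Then for all i ≤ n and all (w₁, w₂) with w₁ Z_i w₂, and every formula φ built from atoms, ⊥, ∧, ∨, →, ◯ with length |φ| ≤ i: M₁, w₁ ⊨ φ iff M₂, w₂ ⊨ φ. -/
import Mathlib


inductive TForm : Type where
  | atom : ℕ → TForm
  | bot : TForm
  | and : TForm → TForm → TForm
  | or : TForm → TForm → TForm
  | imp : TForm → TForm → TForm
  | next : TForm → TForm
  | dia : TForm → TForm
  | box : TForm → TForm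
  | untl : TForm → TForm → TForm
  | rels : TForm → TForm → TForm

/-- Intuitionistic temporal satisfaction over a dynamic poset `(W, ≤, S)`
with valuation `V`. -/
def sat {W : Type} [PartialOrder W] (S : W → W) (V : W → ℕ → Prop) : TForm → W → Prop
  | .atom p, w => V w p
  | .bot, _ => False
  | .and φ ψ, w => sat S V φ w ∧ sat S V ψ w
  | .or φ ψ, w => sat S V φ w ∨ sat S V ψ w
  | .imp φ ψ, w => ∀ v, w ≤ v → sat S V φ v → sat S V ψ v
  | .next φ, w => sat S V φ (S w)
  | .dia φ, w => ∃ k, sat S V φ (S^[k] w)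
  | .box φ, w => ∀ k, sat S V φ (S^[k] w)
  | .untl φ ψ, w => ∃ k, sat S V ψ (S^[k] w) ∧ ∀ i < k, sat S V φ (S^[i] w)
  | .rels φ ψ, w => ∀ k, sat S V ψ (S^[k] w) ∨ ∃ i < k, sat S V φ (S^[i] w)

/-- The length (number of connectives) of a formula. -/
def len : TForm → ℕ
  | .atom _ => 0
  | .bot => 0
  | .and φ ψ => 1 + len φ + len ψ
  | .or φ ψ => 1 + len φ + len ψ
  | .imp φ ψ => 1 + len φ + len ψ
  | .next φ => 1 + len φ
  | .dia φ => 1 + len φ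
  | .box φ => 1 + len φ
  | .untl φ ψ => 1 + len φ + len ψ
  | .rels φ ψ => 1 + len φ + len ψ

/-- Formulas using only the connectives ⊥, ∧, ∨, →, and {next}. -/
def LangNext : TForm → Prop
  | .atom _ => True
  | .bot => True
  | .and φ ψ => LangNext φ ∧ LangNext ψ
  | .or φ ψ => LangNext φ ∧ LangNext ψ
  | .imp φ ψ => LangNext φ ∧ LangNext ψ
  | .next φ => LangNext φ
  | .dia _ => False
  | .box _ => False
  | .untl _ _ => False
  | .rels _ _ => False

/-- Bounded ◯-bisimulations preserve ◯-formulas of bounded length. -/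
theorem next_bisim_invariance {W₁ W₂ : Type} [PartialOrder W₁] [PartialOrder W₂]
    (S₁ : W₁ → W₁) (V₁ : W₁ → ℕ → Prop) (S₂ : W₂ → W₂) (V₂ : W₂ → ℕ → Prop)
    (hS₁ : ∀ w v : W₁, w ≤ v → S₁ w ≤ S₁ v)
    (hV₁ : ∀ w v : W₁, w ≤ v → ∀ p, V₁ w p → V₁ v p)
    (hS₂ : ∀ w v : W₂, w ≤ v → S₂ w ≤ S₂ v)
    (hV₂ : ∀ w v : W₂, w ≤ v → ∀ p, V₂ w p → V₂ v p)
    (n : ℕ) (hn : 0 < n) (Z : ℕ → W₁ → W₂ → Prop)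
    (hchain : ∀ i < n, ∀ w₁ w₂, Z (i+1) w₁ w₂ → Z i w₁ w₂)
    (hatoms : ∀ i < n, ∀ w₁ w₂, Z i w₁ w₂ → ∀ p, V₁ w₁ p ↔ V₂ w₂ p)
    (hforth_imp : ∀ i < n, ∀ w₁ w₂, Z (i+1) w₁ w₂ →
      ∀ v₁, w₁ ≤ v₁ → ∃ v₂, w₂ ≤ v₂ ∧ Z i v₁ v₂)
    (hback_imp : ∀ i < n, ∀ w₁ w₂, Z (i+1) w₁ w₂ →
      ∀ v₂, w₂ ≤ v₂ → ∃ v₁, w₁ ≤ v₁ ∧ Z i v₁ v₂)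
    (hnext : ∀ i < n, ∀ w₁ w₂, Z (i+1) w₁ w₂ → Z i (S₁ w₁) (S₂ w₂)) :
    ∀ i ≤ n, ∀ w₁ w₂, Z i w₁ w₂ → ∀ φ, LangNext φ → len φ ≤ i →
      (sat S₁ V₁ φ w₁ ↔ sat S₂ V₂ φ w₂) := by

  have Zdown : ∀ i ≤ n, ∀ j ≤ i, ∀ w₁ w₂, Z i w₁ w₂ → Z j w₁ w₂ := by
    intro i hi
    induction i with
    | zero =>
      intro j hj w₁ w₂ h
      obtain rfl : j = 0 := Nat.le_zero.mp hj
      exact h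
    | succ k ih =>
      intro j hj w₁ w₂ h
      rcases Nat.eq_or_lt_of_le hj with rfl | hlt
      · exact h
      · exact ih (by omega) j (by omega) w₁ w₂ (hchain k (by omega) w₁ w₂ h)
  intro i hi w₁ w₂ hZ φ
  induction φ generalizing i w₁ w₂ with
  | atom p =>
    intro _ _
    exact hatoms 0 hn w₁ w₂ (Zdown i hi 0 (Nat.zero_le _) w₁ w₂ hZ) p
  | bot => intro _ _; simp [sat]
  | and φ ψ ihφ ihψ =>
    intro hL hlen
    obtain ⟨j, rfl⟩ : ∃ j, i = j + 1 := ⟨i - 1, by simp [len] at hlen; omega⟩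
    have hZ' := hchain j (by omega) w₁ w₂ hZ
    simp only [sat]
    rw [ihφ j (by omega) w₁ w₂ hZ' hL.1 (by simp [len] at hlen; omega),
        ihψ j (by omega) w₁ w₂ hZ' hL.2 (by simp [len] at hlen; omega)]
  | or φ ψ ihφ ihψ =>
    intro hL hlen
    obtain ⟨j, rfl⟩ : ∃ j, i = j + 1 := ⟨i - 1, by simp [len] at hlen; omega⟩
    have hZ' := hchain j (by omega) w₁ w₂ hZ
    simp only [sat]
    rw [ihφ j (by omega) w₁ w₂ hZ' hL.1 (by simp [len] at hlen; omega),
        ihψ j (by omega) w₁ w₂ hZ' hL.2 (by simp [len] at hlen; omega)]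
  | imp φ ψ ihφ ihψ =>
    intro hL hlen
    obtain ⟨j, rfl⟩ : ∃ j, i = j + 1 := ⟨i - 1, by simp [len] at hlen; omega⟩
    constructor
    · intro h v₂ hv₂ hφ
      obtain ⟨v₁, hv₁, hZv⟩ := hback_imp j (by omega) w₁ w₂ hZ v₂ hv₂
      exact (ihψ j (by omega) v₁ v₂ hZv hL.2 (by simp [len] at hlen; omega)).mp
        (h v₁ hv₁ ((ihφ j (by omega) v₁ v₂ hZv hL.1 (by simp [len] at hlen; omega)).mpr hφ))
    · intro h v₁ hv₁ hφ
      obtain ⟨v₂, hv₂, hZv⟩ := hforth_imp j (by omega) w₁ w₂ hZ v₁ hv₁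
      exact (ihψ j (by omega) v₁ v₂ hZv hL.2 (by simp [len] at hlen; omega)).mpr
        (h v₂ hv₂ ((ihφ j (by omega) v₁ v₂ hZv hL.1 (by simp [len] at hlen; omega)).mp hφ))
  | next φ ihφ =>
    intro hL hlen
    obtain ⟨j, rfl⟩ : ∃ j, i = j + 1 := ⟨i - 1, by simp [len] at hlen; omega⟩
    exact ihφ j (by omega) _ _ (hnext j (by omega) w₁ w₂ hZ) hL (by simp [len] at hlen; omega)
  | dia φ _ => intro hL; exact absurd hL id
  | box φ _ => intro hL; exact absurd hL id
  | untl φ ψ _ _ => intro hL; exact absurd hL id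
  | rels φ ψ _ _ => intro hL; exact absurd hL id
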